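/- Let n ≥ 1, let p₁, …, p_n ∈ ℝ³ and k₁, …, k_n > 0, and set k_c := Σᵢ kᵢ, p_c := (1/k_c) Σᵢ kᵢ pᵢ, and M := Σᵢ kᵢ (pᵢ − p_c)(pᵢ − p_c)ᵀ. For any matrix R̃ ∈ ℝ^{3×3} and any p̃ ∈ ℝ³, define ỹᵢ := (I₃ − R̃ᵀ) pᵢ + R̃ᵀ p̃. Then Σᵢ kᵢ ỹᵢ (pᵢ − p_c)ᵀ = (I₃ − R̃)ᵀ M. (In particular, the attitude innovation term Δ_R = (I₃ − R̃)ᵀ M is independent of the position error p̃.) -/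
import Mathlib

open Matrix

private lemma vmv_add_left (u v w : Fin 3 → ℝ) :
    vecMulVec (u + v) w = vecMulVec u w + vecMulVec v w := by
  ext x y; simp [vecMulVec]; ring

private lemma vmv_mulVec (A : Matrix (Fin 3) (Fin 3) ℝ) (u v : Fin 3 → ℝ) :
    vecMulVec (A.mulVec u) v = A * vecMulVec u v := by
  ext x y; simp [vecMulVec, mulVec, dotProduct, mul_apply, Finset.sum_mul]
  exact Finset.sum_congr rfl fun j _ => by ring

private lemma vmv_sum {n : ℕ} (c : Fin 3 → ℝ) (k : Fin n → ℝ) (f : Fin n → Fin 3 → ℝ) :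
    ∑ i, k i • vecMulVec c (f i) = vecMulVec c (∑ i, k i • f i) := by
  ext x y
  simp [vecMulVec, Matrix.sum_apply, Finset.sum_apply, Finset.mul_sum]
  exact Finset.sum_congr rfl fun i _ => by ring

theorem innovation_DeltaR_eq
    (n : ℕ) (hn : 1 ≤ n) (p : Fin n → Fin 3 → ℝ) (k : Fin n → ℝ)
    (hk : ∀ i, 0 < k i)
    (kc : ℝ) (hkc : kc = ∑ i, k i)
    (pc : Fin 3 → ℝ) (hpc : pc = kc⁻¹ • ∑ i, k i • p i)
    (M : Matrix (Fin 3) (Fin 3) ℝ)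
    (hM : M = ∑ i, k i • vecMulVec (p i - pc) (p i - pc))
    (Rt : Matrix (Fin 3) (Fin 3) ℝ) (pt : Fin 3 → ℝ)
    (yt : Fin n → Fin 3 → ℝ)
    (hyt : ∀ i, yt i = (1 - Rtᵀ).mulVec (p i) + Rtᵀ.mulVec pt) :
    ∑ i, k i • vecMulVec (yt i) (p i - pc) = (1 - Rt)ᵀ * M := by
  have hne : (Finset.univ : Finset (Fin n)).Nonempty := by
    simpa [Finset.univ_nonempty_iff] using Fin.pos_iff_nonempty.mp hn
  have hkc0 : kc ≠ 0 := by
    rw [hkc]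
    exact ne_of_gt (Finset.sum_pos (fun i _ => hk i) hne)
  have hzero : ∑ i, k i • (p i - pc) = 0 := by
    have : ∑ i, k i • (p i - pc) = (∑ i, k i • p i) - kc • pc := by
      simp [smul_sub, Finset.sum_sub_distrib, hkc, Finset.sum_smul]
    rw [this, hpc, smul_smul, mul_inv_cancel₀ hkc0, one_smul, sub_self]
  -- rewrite yt
  set A := (1 : Matrix (Fin 3) (Fin 3) ℝ) - Rtᵀ with hA
  set c := A.mulVec pc + Rtᵀ.mulVec pt with hc
  have hyt' : ∀ i, yt i = A.mulVec (p i - pc) + c := by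
    intro i
    rw [hyt i, hc, hA]
    rw [Matrix.mulVec_sub]
    abel
  calc ∑ i, k i • vecMulVec (yt i) (p i - pc)
      = ∑ i, (k i • vecMulVec (A.mulVec (p i - pc)) (p i - pc)
            + k i • vecMulVec c (p i - pc)) := by
        refine Finset.sum_congr rfl fun i _ => ?_
        rw [hyt' i, vmv_add_left, smul_add]
    _ = ∑ i, k i • (A * vecMulVec (p i - pc) (p i - pc))
        + ∑ i, k i • vecMulVec c (p i - pc) := by
        rw [Finset.sum_add_distrib]
        simp [vmv_mulVec]
    _ = A * M := by
        have h0 : vecMulVec c (0 : Fin 3 → ℝ) = 0 := by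
          ext x y; simp [vecMulVec]
        rw [vmv_sum, hzero, h0, hM]
        simp [Finset.mul_sum, Matrix.mul_smul]
    _ = (1 - Rt)ᵀ * M := by rw [hA, Matrix.transpose_sub, Matrix.transpose_one]
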